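/- Let G be a graph on n vertices and let u, v be two nonadjacent vertices of G with d_G(u) + d_G(v) ≥ k. Then G contains no linear forest with k edges if and only if the graph G + uv obtained by adding the edge uv contains no linear forest with k edges. (Equivalently: the property of being L_{n,k}-free is k-stable.) -/

import Mathlib

set_option linter.unusedSectionVars false
set_option maxHeartbeats 1600000

/-- A linear forest is a graph all of whose connected components are paths or
isolated vertices; equivalently, an acyclic graph of maximum degree at most 2. -/
def IsLinearForest {V : Type*} (F : SimpleGraph V) : Prop :=
  F.IsAcyclic ∧ ∀ v : V, (F.neighborSet v).ncard ≤ 2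

namespace LinForest
open List SimpleGraph

variable {V : Type*} [DecidableEq V] {G F : SimpleGraph V}

/-- consecutive pairs of a list, as unordered pairs -/
def pairs (l : List V) : List (Sym2 V) := List.zipWith (fun a b => s(a,b)) l l.tail

/-- edge set of a path system -/
def sysE (L : List (List V)) : Set (Sym2 V) := {e | ∃ l ∈ L, e ∈ pairs l}

/-- validity of a path system for graph G -/
def Ok (G : SimpleGraph V) (L : List (List V)) : Prop :=
  (∀ l ∈ L, l ≠ [] ∧ l.Nodup ∧ l.Chain' G.Adj) ∧ L.Pairwise List.Disjoint

/-- number of edges of a path system -/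
def cnt (L : List (List V)) : ℕ := (L.map (fun l => l.length - 1)).sum

@[simp] lemma pairs_nil : pairs ([] : List V) = [] := rfl
@[simp] lemma pairs_single (a : V) : pairs [a] = [] := rfl
@[simp] lemma pairs_cons (a b : V) (t : List V) :
    pairs (a :: b :: t) = s(a,b) :: pairs (b :: t) := rfl

lemma length_pairs (l : List V) : (pairs l).length = l.length - 1 := by
  simp [pairs]

lemma mem_pairs {l : List V} {e : Sym2 V} :
    e ∈ pairs l ↔ ∃ i, ∃ h : i + 1 < l.length, e = s(l[i], l[i+1]) := by
  constructor
  · intro h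
    rw [List.mem_iff_getElem] at h
    obtain ⟨i, hi, hei⟩ := h
    rw [length_pairs] at hi
    refine ⟨i, by omega, ?_⟩
    rw [← hei]
    simp [pairs, List.getElem_zipWith, List.getElem_tail]
  · rintro ⟨i, h, rfl⟩
    rw [List.mem_iff_getElem]
    refine ⟨i, by rw [length_pairs]; omega, ?_⟩
    simp [pairs, List.getElem_zipWith, List.getElem_tail]

lemma mem_of_mem_pairs {l : List V} {a b : V} (h : s(a,b) ∈ pairs l) :
    a ∈ l ∧ b ∈ l := by
  rw [mem_pairs] at h
  obtain ⟨i, hi, he⟩ := h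
  rw [Sym2.eq_iff] at he
  rcases he with ⟨rfl, rfl⟩ | ⟨rfl, rfl⟩ <;>
    exact ⟨List.getElem_mem _, List.getElem_mem _⟩

lemma pairs_append {l₁ l₂ : List V} (h₁ : l₁ ≠ []) (h₂ : l₂ ≠ []) :
    pairs (l₁ ++ l₂) = pairs l₁ ++ s(l₁.getLast h₁, l₂.head h₂) :: pairs l₂ := by
  induction l₁ with
  | nil => simp at h₁
  | cons a t ih =>
    cases t with
    | nil =>
      cases l₂ with
      | nil => simp at h₂
      | cons b t₂ => simp
    | cons b t' =>
      have : (a :: b :: t') ++ l₂ = a :: b :: (t' ++ l₂) := by simp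
      rw [this, pairs_cons]
      have hbt : (b :: t') ≠ [] := by simp
      have := ih hbt
      rw [List.cons_append, pairs_cons] at *
      rw [this]
      simp [List.getLast_cons]

lemma pairs_reverse (l : List V) : pairs l.reverse = (pairs l).reverse := by
  induction l with
  | nil => simp
  | cons a t ih =>
    cases t with
    | nil => simp
    | cons b t' =>
      have hrev : (a :: b :: t').reverse = (b :: t').reverse ++ [a] := by simp
      rw [hrev, pairs_append (by simp) (by simp), ih]
      rw [pairs_cons]
      simp [List.getLast_reverse, Sym2.eq_swap]

@[simp] lemma sysE_nil : sysE ([] : List (List V)) = ∅ := by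
  ext e; simp [sysE]

lemma sysE_cons (l : List V) (R : List (List V)) :
    sysE (l :: R) = {e | e ∈ pairs l} ∪ sysE R := by
  ext e; simp [sysE]

@[simp] lemma cnt_nil : cnt ([] : List (List V)) = 0 := rfl

lemma cnt_cons (l : List V) (R : List (List V)) :
    cnt (l :: R) = (l.length - 1) + cnt R := by
  simp [cnt]

lemma ok_cons_iff {l : List V} {R : List (List V)} :
    Ok G (l :: R) ↔ ((l ≠ [] ∧ l.Nodup ∧ l.Chain' G.Adj) ∧
      (∀ l' ∈ R, l.Disjoint l') ∧ Ok G R) := by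
  unfold Ok
  rw [List.pairwise_cons]
  constructor
  · rintro ⟨h1, h2, h3⟩
    exact ⟨h1 l (by simp), h2, fun l' hl' => h1 l' (by simp [hl']), h3⟩
  · rintro ⟨h1, h2, h3, h4⟩
    refine ⟨fun l' hl' => ?_, h2, h4⟩
    rcases List.mem_cons.1 hl' with rfl | h
    · exact h1
    · exact h3 l' h

lemma Ok.tail {l : List V} {R : List (List V)} (h : Ok G (l :: R)) : Ok G R :=
  (ok_cons_iff.1 h).2.2

lemma Ok.mono (hGG : G ≤ G') {L : List (List V)} (h : Ok G L) : Ok G' L := by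
  refine ⟨fun l hl => ?_, h.2⟩
  obtain ⟨h1, h2, h3⟩ := h.1 l hl
  exact ⟨h1, h2, h3.imp fun a b hab => hGG hab⟩

lemma Ok.perm {L L' : List (List V)} (h : Ok G L) (hp : L.Perm L') : Ok G L' := by
  refine ⟨fun l hl => h.1 l (hp.symm.subset hl), ?_⟩
  exact (hp.pairwise_iff (fun hab => List.Disjoint.symm hab)).1 h.2

lemma cnt_perm {L L' : List (List V)} (hp : L.Perm L') : cnt L = cnt L' :=
  (hp.map _).sum_eq

lemma sysE_perm {L L' : List (List V)} (hp : L.Perm L') : sysE L = sysE L' := by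
  ext e; constructor <;> rintro ⟨l, hl, he⟩
  · exact ⟨l, hp.subset hl, he⟩
  · exact ⟨l, hp.symm.subset hl, he⟩

/-- replacing first list by its reverse -/
lemma Ok.reverse_head {l : List V} {R : List (List V)} (h : Ok G (l :: R)) :
    Ok G (l.reverse :: R) := by
  rw [ok_cons_iff] at h ⊢
  obtain ⟨⟨h1, h2, h3⟩, h4, h5⟩ := h
  refine ⟨⟨by simpa using h1, by simpa using h2, ?_⟩,
    fun l' hl' a ha => h4 l' hl' (by simpa using ha), h5⟩
  show List.IsChain _ _
  rw [List.isChain_reverse]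
  exact h3.imp fun a b hab => hab.symm

lemma sysE_reverse_head (l : List V) (R : List (List V)) :
    sysE (l.reverse :: R) = sysE (l :: R) := by
  rw [sysE_cons, sysE_cons, pairs_reverse]
  ext e; simp

lemma cnt_reverse_head (l : List V) (R : List (List V)) :
    cnt (l.reverse :: R) = cnt (l :: R) := by
  simp [cnt_cons]

/-- adding a fresh singleton -/
lemma Ok.single_fresh {x : V} {L : List (List V)} (h : Ok G L)
    (hx : ∀ l ∈ L, x ∉ l) : Ok G ([x] :: L) := by
  rw [ok_cons_iff]
  exact ⟨⟨by simp, by simp, List.IsChain.singleton _⟩,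
    fun l' hl' a ha => by simp at ha; subst ha; exact fun h' => hx l' hl' h', h⟩

@[simp] lemma sysE_single_cons (x : V) (L : List (List V)) :
    sysE ([x] :: L) = sysE L := by
  rw [sysE_cons]; ext e; simp [pairs]

@[simp] lemma cnt_single_cons (x : V) (L : List (List V)) :
    cnt ([x] :: L) = cnt L := by simp [cnt_cons]

/-- members of lists of a system: a vertex lies in at most one list -/
lemma Ok.unique_list {L : List (List V)} (h : Ok G L) {l₁ l₂ : List V}
    (h₁ : l₁ ∈ L) (h₂ : l₂ ∈ L) {x : V} (hx₁ : x ∈ l₁) (hx₂ : x ∈ l₂) : l₁ = l₂ := by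
  by_contra hne
  have : Std.Symm (α := List V) List.Disjoint := ⟨fun _ _ hab => List.Disjoint.symm hab⟩
  have := List.Pairwise.forall h.2 h₁ h₂ hne
  exact this hx₁ hx₂

lemma walk_end_mem_support {x y : V} (p : F.Walk x y) (hne : x ≠ y) :
    y ∈ F.support := by
  induction p with
  | nil => exact absurd rfl hne
  | @cons u v w h q ih =>
    by_cases hvw : v = w
    · subst hvw; exact (F.mem_support).2 ⟨u, h.symm⟩
    · exact ih hvw

lemma mem_support_of_reachable {x y : V} (h : F.Reachable x y) (hne : x ≠ y) :
    y ∈ F.support := by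
  obtain ⟨p⟩ := h
  exact walk_end_mem_support p hne

lemma reachable_eq_of_not_support {x y : V} (h : F.Reachable x y)
    (hy : y ∉ F.support) : x = y := by
  by_contra hne
  exact hy (mem_support_of_reachable h hne)

/-- Key lemma: adding an edge between two non-connected vertices keeps acyclicity. -/
lemma acyclic_add {x y : V} (hF : F.IsAcyclic) (hne : x ≠ y)
    (hr : ¬ F.Reachable x y) :
    (F ⊔ SimpleGraph.fromEdgeSet {s(x,y)}).IsAcyclic := by
  have hnadj : ¬ F.Adj x y := fun h => hr h.reachable
  set H := F ⊔ SimpleGraph.fromEdgeSet {s(x,y)} with hH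
  have hHadj : H.Adj x y := by
    simp [hH, SimpleGraph.fromEdgeSet_adj, hne]
  have hdel : H \ SimpleGraph.fromEdgeSet {s(x,y)} = F := by
    ext a b
    simp only [SimpleGraph.sdiff_adj, SimpleGraph.fromEdgeSet_adj, Set.mem_singleton_iff, hH, SimpleGraph.sup_adj,
      SimpleGraph.fromEdgeSet_adj, Set.mem_singleton_iff]
    constructor
    · rintro ⟨h1 | ⟨h1, h2⟩, h3⟩
      · exact h1
      · exact absurd ⟨h1, h2⟩ h3
    · intro h
      refine ⟨Or.inl h, fun he => ?_⟩
      obtain ⟨he1, he2⟩ := he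
      rw [Sym2.eq_iff] at he1
      rcases he1 with ⟨rfl, rfl⟩ | ⟨rfl, rfl⟩
      · exact hnadj h
      · exact hnadj h.symm
  have hbridge : H.IsBridge s(x,y) := by
    rw [SimpleGraph.isBridge_iff]
    show ¬ (H \ SimpleGraph.fromEdgeSet {s(x,y)}).Reachable x y
    rw [hdel]
    exact hr
  intro a c hc
  have hnotmem : s(x,y) ∉ c.edges :=
    (SimpleGraph.isBridge_iff_forall_cycle_notMem ((H.mem_edgeSet).2 hHadj)).1 hbridge c hc
  have hedges : ∀ e ∈ c.edges, e ∈ F.edgeSet := by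
    intro e he
    have : e ∈ H.edgeSet := c.edges_subset_edgeSet he
    rw [hH, SimpleGraph.edgeSet_sup, SimpleGraph.edgeSet_fromEdgeSet] at this
    rcases this with h | ⟨h1, _⟩
    · exact h
    · rw [Set.mem_singleton_iff] at h1; subst h1; exact absurd he hnotmem
  exact hF (c.transfer F hedges) (hc.transfer hedges)

lemma IsAcyclic.anti {F' : SimpleGraph V} (hle : F' ≤ F) (h : F.IsAcyclic) :
    F'.IsAcyclic := by
  intro a c hc
  exact h (c.mapLe hle) ((SimpleGraph.Walk.mapLe_isCycle hle).2 hc)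

/-- every edge of an acyclic graph is a bridge, reachability form -/
lemma acyclic_not_reachable_delete {x y : V} (hF : F.IsAcyclic) (hadj : F.Adj x y) :
    ¬ (F.deleteEdges {s(x,y)}).Reachable x y := by
  have hbridge := SimpleGraph.isAcyclic_iff_forall_adj_isBridge.1 hF hadj
  rw [SimpleGraph.isBridge_iff] at hbridge
  exact hbridge

lemma chain_reachable {l : List V} (hc : l.Chain' F.Adj) {a b : V}
    (ha : a ∈ l) (hb : b ∈ l) : F.Reachable a b := by
  have key : ∀ (h : V) (t : List V), List.Chain F.Adj h t → ∀ c ∈ h :: t, F.Reachable h c := by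
    intro h t
    induction t generalizing h with
    | nil => intro _ c hc; simp at hc; subst hc; exact Reachable.refl _
    | cons d t' ih =>
      intro hch c hc
      replace hch : F.Adj h d ∧ List.Chain F.Adj d t' := List.isChain_cons_cons.1 hch
      rcases List.mem_cons.1 hc with rfl | hc'
      · exact Reachable.refl _
      · exact (hch.1.reachable).trans (ih d hch.2 c hc')
  cases l with
  | nil => simp at ha
  | cons h t =>
    have hch : List.Chain F.Adj h t := hc
    exact (key h t hch a ha).symm.trans (key h t hch b hb)

-- new material
lemma chain'_getElem_adj {l : List V} (hc : l.Chain' G.Adj) {i : ℕ} (h : i + 1 < l.length) :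
    G.Adj l[i] l[i+1] := by
  have := List.isChain_iff_getElem.1 hc i h
  simpa [List.get_eq_getElem] using this

lemma mem_edgeSet_of_mem_sysE {L : List (List V)} (hOk : Ok G L) {e : Sym2 V}
    (he : e ∈ sysE L) : e ∈ G.edgeSet := by
  obtain ⟨l, hl, hel⟩ := he
  obtain ⟨i, hi, rfl⟩ := mem_pairs.1 hel
  exact (hOk.1 l hl).2.2 |> fun hc => chain'_getElem_adj hc hi

lemma pairs_nodup {l : List V} (h : l.Nodup) : (pairs l).Nodup := by
  rw [List.nodup_iff_injective_get]
  rintro ⟨i, hi⟩ ⟨j, hj⟩ hij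
  rw [length_pairs] at hi hj
  simp only [List.get_eq_getElem, pairs, List.getElem_zipWith, List.getElem_tail] at hij
  rw [Sym2.eq_iff] at hij
  have inj := List.nodup_iff_injective_get.1 h
  rcases hij with ⟨h1, h2⟩ | ⟨h1, h2⟩
  · have : i = j := h.getElem_inj_iff.1 h1
    simp [this]
  · have hij1 : i = j + 1 := h.getElem_inj_iff.1 h1
    have hij2 : i + 1 = j := h.getElem_inj_iff.1 h2
    omega

lemma not_diag_of_mem_pairs {l : List V} (hnd : l.Nodup) {e : Sym2 V}
    (he : e ∈ pairs l) : ¬ e.IsDiag := by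
  obtain ⟨i, hi, rfl⟩ := mem_pairs.1 he
  rw [Sym2.isDiag_iff_proj_eq]
  intro h
  have : i = i + 1 := hnd.getElem_inj_iff.1 h
  omega

lemma support_sysGraph {L : List (List V)} {x : V}
    (hx : x ∈ (SimpleGraph.fromEdgeSet (sysE L)).support) : ∃ l ∈ L, x ∈ l := by
  obtain ⟨w, hw⟩ := ((SimpleGraph.fromEdgeSet (sysE L)).mem_support).1 hx
  rw [SimpleGraph.fromEdgeSet_adj] at hw
  obtain ⟨⟨l, hl, he⟩, _⟩ := hw
  exact ⟨l, hl, (mem_of_mem_pairs he).1⟩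

lemma sysGraph_acyclic {L : List (List V)} (hOk : Ok G L) :
    (SimpleGraph.fromEdgeSet (sysE L)).IsAcyclic := by
  have inner : ∀ (l : List V) (R : List (List V)), Ok G (l :: R) →
      (SimpleGraph.fromEdgeSet (sysE R)).IsAcyclic →
      (SimpleGraph.fromEdgeSet (sysE (l :: R))).IsAcyclic := by
    intro l
    induction l with
    | nil => intro R hOk _; exact absurd rfl (ok_cons_iff.1 hOk).1.1
    | cons a t ih =>
      intro R hOk hR
      cases t with
      | nil =>
        have : sysE ([a] :: R) = sysE R := by
          rw [sysE_cons]; ext e; simp [pairs]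
        rwa [this]
      | cons b t' =>
        have hOk' : Ok G ((b :: t') :: R) := by
          rw [ok_cons_iff] at hOk ⊢
          obtain ⟨⟨h1, h2, h3⟩, h4, h5⟩ := hOk
          exact ⟨⟨by simp, h2.of_cons, h3.tail⟩,
            fun l' hl' c hc hc' => h4 l' hl' (by simp [hc]) hc', h5⟩
        have hacy' := ih R hOk' hR
        have hsplit : sysE ((a :: b :: t') :: R) = sysE ((b :: t') :: R) ∪ {s(a,b)} := by
          rw [sysE_cons, sysE_cons]
          ext e
          simp only [Set.mem_union, Set.mem_setOf_eq, Set.mem_singleton_iff]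
          constructor
          · rintro (he | he)
            · rcases List.mem_cons.1 he with h | h
              · exact Or.inr (by simpa using h)
              · exact Or.inl (Or.inl h)
            · exact Or.inl (Or.inr he)
          · rintro ((he | he) | he)
            · exact Or.inl (List.mem_cons_of_mem _ he)
            · exact Or.inr he
            · subst he
              exact Or.inl (show s(a,b) ∈ s(a,b) :: pairs (b :: t') from
                List.mem_cons_self)
        rw [hsplit, SimpleGraph.fromEdgeSet_union]
        rw [ok_cons_iff] at hOk
        obtain ⟨⟨h1, h2, h3⟩, h4, h5⟩ := hOk
        have hab : a ≠ b := by
          intro h; subst h; simp at h2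
        have hfresh : a ∉ (SimpleGraph.fromEdgeSet (sysE ((b :: t') :: R))).support := by
          intro hmem
          obtain ⟨l', hl', hal'⟩ := support_sysGraph hmem
          rcases List.mem_cons.1 hl' with rfl | h
          · exact (List.nodup_cons.1 h2).1 hal'
          · exact h4 l' h (by simp) hal'
        have hnr : ¬ (SimpleGraph.fromEdgeSet (sysE ((b :: t') :: R))).Reachable a b := by
          intro hr
          exact hab (reachable_eq_of_not_support hr.symm hfresh).symm
        exact acyclic_add hacy' hab hnr
  induction L with
  | nil =>
    rw [sysE_nil, SimpleGraph.fromEdgeSet_empty]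
    exact SimpleGraph.isAcyclic_bot
  | cons l R ihL => exact inner l R hOk (ihL (ok_cons_iff.1 hOk).2.2)

lemma sysE_finite (L : List (List V)) : (sysE L).Finite := by
  induction L with
  | nil => simp [sysE_nil]
  | cons l R ih =>
    rw [sysE_cons]
    refine Set.Finite.union ?_ ih
    have : {e : Sym2 V | e ∈ pairs l} = ↑(pairs l).toFinset := by ext e; simp
    rw [this]
    exact (pairs l).toFinset.finite_toSet

lemma ncard_sysE {L : List (List V)} (hOk : Ok G L) : (sysE L).ncard = cnt L := by
  induction L with
  | nil => simp [sysE_nil, cnt]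
  | cons l R ih =>
    rw [sysE_cons, cnt_cons]
    have hOkR := hOk.tail
    have hdisj : Disjoint {e : Sym2 V | e ∈ pairs l} (sysE R) := by
      rw [Set.disjoint_left]
      rintro e hel ⟨l', hl', hel'⟩
      induction e using Sym2.ind with
      | _ a b =>
        have h1 := mem_of_mem_pairs hel
        have h2 := mem_of_mem_pairs hel'
        exact (ok_cons_iff.1 hOk).2.1 l' hl' h1.1 h2.1
    rw [Set.ncard_union_eq hdisj (by
      have : {e : Sym2 V | e ∈ pairs l} = ↑(pairs l).toFinset := by ext e; simp
      rw [this]; exact (pairs l).toFinset.finite_toSet) (sysE_finite R)]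
    have hnd := (hOk.1 l (by simp)).2.1
    have h1 : {e : Sym2 V | e ∈ pairs l} = ↑(pairs l).toFinset := by ext e; simp
    rw [h1, Set.ncard_coe_finset, List.toFinset_card_of_nodup (pairs_nodup hnd),
      length_pairs, ih hOkR]

lemma sysGraph_deg_le {L : List (List V)} (hOk : Ok G L) (x : V) :
    ((SimpleGraph.fromEdgeSet (sysE L)).neighborSet x).ncard ≤ 2 := by
  by_cases hx : ∃ l ∈ L, x ∈ l
  · obtain ⟨l, hl, hxl⟩ := hx
    obtain ⟨i, hi, hgi⟩ := List.mem_iff_getElem.1 hxl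
    have hnd := (hOk.1 l hl).2.1
    have hsub : (SimpleGraph.fromEdgeSet (sysE L)).neighborSet x ⊆
        {l.getD (i+1) x, l.getD (i-1) x} := by
      intro w hw
      rw [SimpleGraph.mem_neighborSet, SimpleGraph.fromEdgeSet_adj] at hw
      obtain ⟨⟨l', hl', he⟩, hxw⟩ := hw
      have hxl' : x ∈ l' := (mem_of_mem_pairs he).1
      have heq : l' = l := hOk.unique_list hl' hl hxl' hxl
      subst heq
      obtain ⟨j, hj, hejj⟩ := mem_pairs.1 he
      rw [Sym2.eq_iff] at hejj
      rcases hejj with ⟨hx1, hw1⟩ | ⟨hx1, hw1⟩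
      · have hji : j = i := hnd.getElem_inj_iff.1 (hx1.symm.trans hgi.symm)
        subst hji
        left
        rw [List.getD_eq_getElem _ _ hj]
        exact hw1
      · have hji : j + 1 = i := hnd.getElem_inj_iff.1 (hx1.symm.trans hgi.symm)
        right
        rw [show i - 1 = j by omega, List.getD_eq_getElem _ _ (by omega)]
        simp only [Set.mem_singleton_iff]
        exact hw1
    calc ((SimpleGraph.fromEdgeSet (sysE L)).neighborSet x).ncard
        ≤ ({l.getD (i+1) x, l.getD (i-1) x} : Set V).ncard :=
          Set.ncard_le_ncard hsub ((Set.finite_singleton _).insert _)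
      _ ≤ 2 := by
          refine le_trans (Set.ncard_insert_le _ _) ?_
          simp
  · have hempty : (SimpleGraph.fromEdgeSet (sysE L)).neighborSet x = ∅ := by
      ext w
      simp only [SimpleGraph.mem_neighborSet, SimpleGraph.fromEdgeSet_adj,
        Set.mem_empty_iff_false, iff_false, not_and]
      rintro ⟨l, hl, he⟩ _
      exact hx ⟨l, hl, (mem_of_mem_pairs he).1⟩ |>.elim
    simp [hempty]

lemma edgeSet_sysGraph {L : List (List V)} (hOk : Ok G L) :
    (SimpleGraph.fromEdgeSet (sysE L)).edgeSet = sysE L := by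
  rw [SimpleGraph.edgeSet_fromEdgeSet]
  ext e
  refine ⟨fun h => h.1, fun h => ⟨h, ?_⟩⟩
  obtain ⟨l, hl, hel⟩ := h
  exact not_diag_of_mem_pairs (hOk.1 l hl).2.1 hel

lemma sys_to_graph {L : List (List V)} (hOk : Ok G L) :
    ∃ F : SimpleGraph V, F ≤ G ∧ IsLinearForest F ∧ F.edgeSet.ncard = cnt L := by
  refine ⟨SimpleGraph.fromEdgeSet (sysE L), ?_,
    ⟨sysGraph_acyclic hOk, sysGraph_deg_le hOk⟩, ?_⟩
  · intro a b hab
    rw [SimpleGraph.fromEdgeSet_adj] at hab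
    exact (G.mem_edgeSet).1 (mem_edgeSet_of_mem_sysE hOk hab.1)
  · rw [edgeSet_sysGraph hOk, ncard_sysE hOk]

lemma aug {lx ly : List V} {R : List (List V)} (hx : lx ≠ []) (hy : ly ≠ [])
    (h : Ok G (lx :: ly :: R))
    (hadj : G.Adj (lx.getLast hx) (ly.head hy)) :
    Ok G ((lx ++ ly) :: R) ∧ cnt ((lx ++ ly) :: R) = cnt (lx :: ly :: R) + 1 ∧
      sysE ((lx ++ ly) :: R) = sysE (lx :: ly :: R) ∪ {s(lx.getLast hx, ly.head hy)} := by
  rw [ok_cons_iff] at h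
  obtain ⟨⟨hx0, hxnd, hxch⟩, hdisjx, hrest⟩ := h
  have hrest' := hrest
  rw [ok_cons_iff] at hrest'
  obtain ⟨⟨hy0, hynd, hych⟩, hdisjy, hR⟩ := hrest'
  have hdxy : lx.Disjoint ly := hdisjx ly (by simp)
  refine ⟨?_, ?_, ?_⟩
  · rw [ok_cons_iff]
    refine ⟨⟨by simp [hx0], hxnd.append hynd hdxy, ?_⟩, ?_, hR⟩
    · refine hxch.append hych ?_
      intro a ha b hb
      rw [List.getLast?_eq_getLast_of_ne_nil hx0] at ha
      rw [List.head?_eq_head hy0] at hb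
      simp only [Option.mem_some_iff] at ha hb
      subst ha; subst hb
      exact hadj
    · intro l' hl' a ha
      rcases List.mem_append.1 ha with h1 | h1
      · exact hdisjx l' (List.mem_cons_of_mem _ hl') h1
      · exact hdisjy l' hl' h1
  · rw [cnt_cons, cnt_cons, cnt_cons]
    have h1 : 0 < lx.length := List.length_pos_iff.2 hx0
    have h2 : 0 < ly.length := List.length_pos_iff.2 hy0
    rw [List.length_append]
    omega
  · rw [sysE_cons, sysE_cons, sysE_cons, pairs_append hx0 hy0]
    ext e
    simp only [Set.mem_union, Set.mem_setOf_eq, List.mem_append, List.mem_cons,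
      Set.mem_singleton_iff]
    tauto

lemma endpoint_of_deg_le_one [Fintype V] {F' : SimpleGraph V} {L : List (List V)}
    (hOk : Ok F' L) (hE : sysE L = F'.edgeSet) {l : List V} (hl : l ∈ L)
    (h0 : l ≠ []) {x : V} (hxl : x ∈ l)
    (hdeg : (F'.neighborSet x).ncard ≤ 1) :
    x = l.head h0 ∨ x = l.getLast h0 := by
  obtain ⟨i, hi, hgi⟩ := List.mem_iff_getElem.1 hxl
  by_contra hcon
  push_neg at hcon
  obtain ⟨hh, hlast⟩ := hcon
  have hnd := (hOk.1 l hl).2.1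
  have hipos : 0 < i := by
    rcases Nat.eq_zero_or_pos i with h | h
    · subst h
      exact absurd ((List.head_eq_getElem_zero h0).trans hgi).symm hh
    · exact h
  have hilast : i < l.length - 1 := by
    rcases Nat.lt_or_ge i (l.length - 1) with h | h
    · exact h
    · exfalso
      have : i = l.length - 1 := by omega
      subst this
      exact hlast (hgi.symm.trans (List.getLast_eq_getElem h0).symm)
      
  have he1 : s(l[i-1], l[(i-1)+1]) ∈ pairs l := mem_pairs.2 ⟨i-1, by omega, rfl⟩
  have he2 : s(l[i], l[i+1]) ∈ pairs l := mem_pairs.2 ⟨i, by omega, rfl⟩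
  have hidx : i - 1 + 1 = i := by omega
  have hadj1 : F'.Adj l[i-1] x := by
    have : s(l[i-1], l[(i-1)+1]) ∈ F'.edgeSet := by
      rw [← hE]; exact ⟨l, hl, he1⟩
    rw [SimpleGraph.mem_edgeSet] at this
    have hee : l[(i-1)+1] = x := by
      rw [← hgi]
      congr 1
    rwa [hee] at this
  have hadj2 : F'.Adj x l[i+1] := by
    have : s(l[i], l[i+1]) ∈ F'.edgeSet := by
      rw [← hE]; exact ⟨l, hl, he2⟩
    rw [SimpleGraph.mem_edgeSet] at this
    rwa [hgi] at this
  have hne12 : l[i-1] ≠ l[i+1] := by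
    intro h
    have := hnd.getElem_inj_iff.1 h
    omega
  have : 1 < (F'.neighborSet x).ncard := by
    rw [Set.one_lt_ncard_iff (Set.toFinite _)]
    exact ⟨l[i-1], l[i+1], hadj1.symm, hadj2, hne12⟩
  omega

lemma graph_to_sys [Fintype V] {F : SimpleGraph V} (hF : IsLinearForest F) :
    ∃ L, Ok F L ∧ sysE L = F.edgeSet := by
  generalize hk : F.edgeSet.ncard = k
  induction k generalizing F with
  | zero =>
    refine ⟨[], ⟨by simp, by simp⟩, ?_⟩
    rw [sysE_nil, eq_comm]
    exact (Set.ncard_eq_zero (Set.toFinite _)).1 hk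
  | succ k ih =>
    have hne : F.edgeSet.Nonempty := Set.nonempty_of_ncard_ne_zero (by omega)
    obtain ⟨e, he⟩ := hne
    revert he
    induction e using Sym2.ind with
    | _ x y =>
    intro he
    have hadj : F.Adj x y := (F.mem_edgeSet).1 he
    have hxy : x ≠ y := hadj.ne
    set F' := F.deleteEdges {s(x,y)} with hF'def
    have hF'le : F' ≤ F := SimpleGraph.deleteEdges_le _
    have hF'edge : F'.edgeSet = F.edgeSet \ {s(x,y)} := SimpleGraph.edgeSet_deleteEdges _
    have hF'k : F'.edgeSet.ncard = k := by
      rw [hF'edge, Set.ncard_diff_singleton_of_mem he, hk]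
      omega
    have hF'LF : IsLinearForest F' := by
      refine ⟨IsAcyclic.anti hF'le hF.1, fun w => ?_⟩
      exact le_trans (Set.ncard_le_ncard (fun a ha => hF'le ha) (Set.toFinite _)) (hF.2 w)
    obtain ⟨L', hOk', hE'⟩ := ih hF'LF hF'k
    -- degree bounds for x and y in F'
    have hNx : F'.neighborSet x = F.neighborSet x \ {y} := by
      ext w
      simp only [SimpleGraph.mem_neighborSet, hF'def, SimpleGraph.deleteEdges_adj,
        Set.mem_diff, Set.mem_singleton_iff, Set.mem_singleton_iff]
      constructor
      · rintro ⟨h1, h2⟩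
        refine ⟨h1, fun hw => h2 ?_⟩
        subst hw; rfl
      · rintro ⟨h1, h2⟩
        refine ⟨h1, fun hc => ?_⟩
        rw [Sym2.eq_iff] at hc
        rcases hc with ⟨h3, h4⟩ | ⟨h3, h4⟩
        · exact h2 h4
        · exact hxy h3
    have hNy : F'.neighborSet y = F.neighborSet y \ {x} := by
      ext w
      simp only [SimpleGraph.mem_neighborSet, hF'def, SimpleGraph.deleteEdges_adj,
        Set.mem_diff, Set.mem_singleton_iff]
      constructor
      · rintro ⟨h1, h2⟩
        refine ⟨h1, fun hw => h2 ?_⟩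
        subst hw
        rw [Sym2.eq_swap]
      · rintro ⟨h1, h2⟩
        refine ⟨h1, fun hc => ?_⟩
        rw [Sym2.eq_iff] at hc
        rcases hc with ⟨h3, h4⟩ | ⟨h3, h4⟩
        · exact hxy h3.symm
        · exact h2 h4
    have hdegx : (F'.neighborSet x).ncard ≤ 1 := by
      rw [hNx, Set.ncard_diff_singleton_of_mem ((F.mem_neighborSet _ _).2 hadj)]
      have := hF.2 x
      omega
    have hdegy : (F'.neighborSet y).ncard ≤ 1 := by
      rw [hNy, Set.ncard_diff_singleton_of_mem ((F.mem_neighborSet _ _).2 hadj.symm)]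
      have := hF.2 y
      omega
    -- not reachable in F'
    have hnr : ¬ F'.Reachable x y := acyclic_not_reachable_delete hF.1 hadj
    -- insert singletons if free
    obtain ⟨L₂, hOk₂, hE₂, hx₂, hy₂⟩ :
        ∃ L₂, Ok F' L₂ ∧ sysE L₂ = F'.edgeSet ∧ (∃ l ∈ L₂, x ∈ l) ∧ (∃ l ∈ L₂, y ∈ l) := by
      by_cases hx : ∃ l ∈ L', x ∈ l
      · by_cases hy : ∃ l ∈ L', y ∈ l
        · exact ⟨L', hOk', hE', hx, hy⟩
        · push_neg at hy
          exact ⟨[y] :: L', hOk'.single_fresh hy, by simpa using hE',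
            by obtain ⟨l, hl, hxl⟩ := hx; exact ⟨l, by simp [hl], hxl⟩,
            ⟨[y], by simp, by simp⟩⟩
      · push_neg at hx
        by_cases hy : ∃ l ∈ L', y ∈ l
        · exact ⟨[x] :: L', hOk'.single_fresh hx, by simpa using hE',
            ⟨[x], by simp, by simp⟩,
            by obtain ⟨l, hl, hyl⟩ := hy; exact ⟨l, by simp [hl], hyl⟩⟩
        · push_neg at hy
          refine ⟨[x] :: [y] :: L', ?_, by simpa using hE',
            ⟨[x], by simp, by simp⟩, ⟨[y], by simp, by simp⟩⟩
          refine Ok.single_fresh (hOk'.single_fresh hy) ?_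
          intro l hl
          rcases List.mem_cons.1 hl with rfl | hl'
          · simp [hxy]
          · exact hx l hl'
    obtain ⟨lx, hlx, hxlx⟩ := hx₂
    obtain ⟨ly, hly, hyly⟩ := hy₂
    have hlxly : lx ≠ ly := by
      intro h
      subst h
      exact hnr (chain_reachable (hOk₂.1 lx hlx).2.2 hxlx hyly)
    -- bring to front
    obtain ⟨R, hperm⟩ : ∃ R, L₂.Perm (lx :: ly :: R) := by
      have h1 := List.perm_cons_erase hlx
      have hlyerase := (List.mem_cons.1 (h1.subset hly)).resolve_left
        (fun h => hlxly h.symm)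
      have h2 := List.perm_cons_erase hlyerase
      exact ⟨_, h1.trans (h2.cons _)⟩
    have hOk₃ : Ok F' (lx :: ly :: R) := hOk₂.perm hperm
    have hE₃ : sysE (lx :: ly :: R) = F'.edgeSet := by rw [← sysE_perm hperm, hE₂]
    have hlx0 : lx ≠ [] := (hOk₃.1 lx (by simp)).1
    have hly0 : ly ≠ [] := (hOk₃.1 ly (by simp)).1
    -- normalize x to be last of first list
    have hxend := endpoint_of_deg_le_one hOk₃ hE₃ (by simp : lx ∈ _) hlx0 hxlx hdegx
    have hyend := endpoint_of_deg_le_one hOk₃ hE₃ (by simp : ly ∈ _) hly0 hyly hdegy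
    obtain ⟨lx', hOkx, hEx, hlx'0, hxlast⟩ :
        ∃ lx', Ok F' (lx' :: ly :: R) ∧ sysE (lx' :: ly :: R) = F'.edgeSet ∧
          ∃ h0 : lx' ≠ [], x = lx'.getLast h0 := by
      rcases hxend with h | h
      · refine ⟨lx.reverse, hOk₃.reverse_head, by rw [sysE_reverse_head, hE₃],
          by simp [hlx0], ?_⟩
        rw [List.getLast_reverse]
        exact h
      · exact ⟨lx, hOk₃, hE₃, hlx0, h⟩
    obtain ⟨ly', hOky, hEy, hly'0, hyhead⟩ :
        ∃ ly', Ok F' (lx' :: ly' :: R) ∧ sysE (lx' :: ly' :: R) = F'.edgeSet ∧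
          ∃ h0 : ly' ≠ [], y = ly'.head h0 := by
      rcases hyend with h | h
      · exact ⟨ly, hOkx, hEx, hly0, h⟩
      · have hswap : (lx' :: ly :: R).Perm (ly :: lx' :: R) := List.Perm.swap _ _ _
        have h1 : Ok F' (ly :: lx' :: R) := hOkx.perm hswap
        have h2 : Ok F' (ly.reverse :: lx' :: R) := h1.reverse_head
        have hswap2 : (ly.reverse :: lx' :: R).Perm (lx' :: ly.reverse :: R) :=
          List.Perm.swap _ _ _
        refine ⟨ly.reverse, h2.perm hswap2, ?_, by simp [hly0], ?_⟩
        · rw [← sysE_perm hswap2, sysE_reverse_head, ← sysE_perm hswap, hEx]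
        · rw [List.head_reverse]
          exact h
    -- now augment with edge x y in F
    have hOkF : Ok F (lx' :: ly' :: R) := hOky.mono hF'le
    have hadj' : F.Adj (lx'.getLast hlx'0) (ly'.head hly'0) := by
      rw [← hxlast, ← hyhead]; exact hadj
    obtain ⟨hOkA, _, hEA⟩ := aug hlx'0 hly'0 hOkF hadj'
    refine ⟨(lx' ++ ly') :: R, hOkA, ?_⟩
    rw [hEA, hEy, ← hxlast, ← hyhead]
    rw [hF'edge]
    ext e
    simp only [Set.mem_union, Set.mem_diff, Set.mem_singleton_iff]
    constructor
    · rintro (⟨h1, _⟩ | h1)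
      · exact h1
      · subst h1; exact he
    · intro h1
      by_cases hc : e = s(x,y)
      · exact Or.inr hc
      · exact Or.inl ⟨h1, hc⟩

/-- The main bridge: existence of a linear forest with k edges iff a path system -/
theorem hasLF_iff_hasSys [Fintype V] (G : SimpleGraph V) (k : ℕ) :
    (∃ F : SimpleGraph V, F ≤ G ∧ IsLinearForest F ∧ F.edgeSet.ncard = k) ↔
    (∃ L, Ok G L ∧ cnt L = k) := by
  constructor
  · rintro ⟨F, hle, hLF, hk⟩
    obtain ⟨L, hOk, hE⟩ := graph_to_sys hLF
    refine ⟨L, hOk.mono hle, ?_⟩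
    rw [← ncard_sysE hOk, hE, hk]
  · rintro ⟨L, hOk, hk⟩
    obtain ⟨F, h1, h2, h3⟩ := sys_to_graph hOk
    exact ⟨F, h1, h2, by rw [h3, hk]⟩

lemma chain'_sup_edge {u v : V} {l : List V}
    (hc : l.Chain' (G ⊔ SimpleGraph.fromEdgeSet {s(u,v)}).Adj)
    (hu : ¬ [u,v] <:+: l) (hv : ¬ [v,u] <:+: l) : l.Chain' G.Adj := by
  induction l with
  | nil => exact List.IsChain.nil
  | cons a t ih =>
    cases t with
    | nil => exact List.IsChain.singleton _
    | cons b t' =>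
      unfold List.Chain' at hc ⊢
      rw [List.isChain_cons_cons] at hc ⊢
      obtain ⟨hab, hrest⟩ := hc
      refine ⟨?_, ih hrest (fun h => hu (List.infix_cons h)) (fun h => hv (List.infix_cons h))⟩
      rcases (SimpleGraph.sup_adj _ _ _ _).1 hab with h | h
      · exact h
      · rw [SimpleGraph.fromEdgeSet_adj, Set.mem_singleton_iff] at h
        obtain ⟨he, hne⟩ := h
        rw [Sym2.eq_iff] at he
        rcases he with ⟨rfl, rfl⟩ | ⟨rfl, rfl⟩
        · exact absurd ⟨[], t', by simp⟩ hu
        · exact absurd ⟨[], t', by simp⟩ hv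

lemma infix_mem {a b : V} {l : List V} (h : [a,b] <:+: l) : a ∈ l ∧ b ∈ l :=
  ⟨h.subset (by simp), h.subset (by simp)⟩

/-- extract the junction u-v from a system over G + uv, or else it is a G-system -/
lemma find_junction {u v : V} (hne : u ≠ v) {L : List (List V)}
    (hOk : Ok (G ⊔ SimpleGraph.fromEdgeSet {s(u,v)}) L) :
    (Ok G L) ∨ ∃ C D R, Ok G ((C ++ [u]) :: (v :: D) :: R) ∧
      cnt ((C ++ [u]) :: (v :: D) :: R) + 1 = cnt L := by
  by_cases hj : ∃ l ∈ L, [u,v] <:+: l ∨ [v,u] <:+: l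
  · right
    obtain ⟨l, hl, hor⟩ := hj
    -- move l to the front, reversing if necessary
    obtain ⟨R, hperm⟩ : ∃ R, L.Perm (l :: R) := ⟨_, List.perm_cons_erase hl⟩
    have hOk1 : Ok (G ⊔ SimpleGraph.fromEdgeSet {s(u,v)}) (l :: R) :=
      hOk.perm hperm
    obtain ⟨l₁, hOk2, hcnt2, hinf⟩ :
        ∃ l₁, Ok (G ⊔ SimpleGraph.fromEdgeSet {s(u,v)}) (l₁ :: R) ∧
          cnt (l₁ :: R) = cnt (l :: R) ∧ [u,v] <:+: l₁ := by
      rcases hor with h | h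
      · exact ⟨l, hOk1, rfl, h⟩
      · refine ⟨l.reverse, hOk1.reverse_head, cnt_reverse_head _ _, ?_⟩
        have : [v,u].reverse <:+: l.reverse := List.IsInfix.reverse h
        simpa using this
    obtain ⟨C, D, hCD⟩ := hinf
    -- l₁ = C ++ [u,v] ++ D
    have hl₁ : l₁ = (C ++ [u]) ++ (v :: D) := by rw [← hCD]; simp
    rw [ok_cons_iff] at hOk2
    obtain ⟨⟨h10, h1nd, h1ch⟩, hdisj, hRok⟩ := hOk2
    rw [hl₁, List.nodup_append] at h1nd
    obtain ⟨hndu, hndv, hdisjuv⟩ := h1nd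
    have hvnotu : v ∉ C ++ [u] := fun hmem => hdisjuv v hmem v (by simp) rfl
    have hunotv : u ∉ v :: D := fun hmem => hdisjuv u (by simp) u hmem rfl
    have hchu : (C ++ [u]).Chain' G.Adj := by
      apply chain'_sup_edge (G := G) (u := u) (v := v)
      · exact h1ch.prefix (by rw [hl₁]; exact ⟨v :: D, rfl⟩)
      · intro h; exact hvnotu (infix_mem h).2
      · intro h; exact hvnotu (infix_mem h).1
    have hchv : (v :: D).Chain' G.Adj := by
      apply chain'_sup_edge (G := G) (u := u) (v := v)
      · exact h1ch.suffix (by rw [hl₁]; exact ⟨C ++ [u], rfl⟩)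
      · intro h; exact hunotv (infix_mem h).1
      · intro h; exact hunotv (infix_mem h).2
    have hGrest : Ok G R := by
      refine ⟨fun l' hl' => ?_, hRok.2⟩
      obtain ⟨h0, hnd, hch⟩ := hRok.1 l' hl'
      refine ⟨h0, hnd, chain'_sup_edge (G := G) (u := u) (v := v) hch ?_ ?_⟩
      · intro h
        exact hdisj l' hl' (by rw [hl₁]; simp) (infix_mem h).1
      · intro h
        exact hdisj l' hl' (by rw [hl₁]; simp) (infix_mem h).2
    refine ⟨C, D, R, ?_, ?_⟩
    · rw [ok_cons_iff]
      refine ⟨⟨by simp, hndu, hchu⟩, ?_, ?_⟩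
      · intro l' hl' a ha
        rcases List.mem_cons.1 hl' with rfl | hl'' 
        · exact fun hav => hdisjuv a ha a hav rfl
        · exact fun hav => hdisj l' hl'' (by rw [hl₁]; exact List.mem_append_left _ ha) hav
      · rw [ok_cons_iff]
        refine ⟨⟨by simp, hndv, hchv⟩, ?_, hGrest⟩
        intro l' hl' a ha hav
        exact hdisj l' hl' (by rw [hl₁]; exact List.mem_append_right _ ha) hav
    · rw [cnt_cons, cnt_cons, cnt_perm hperm, ← hcnt2, cnt_cons, hl₁]
      simp only [List.length_append, List.length_cons, List.length_singleton]
      omega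
  · left
    push_neg at hj
    refine ⟨fun l hl => ?_, hOk.2⟩
    obtain ⟨h0, hnd, hch⟩ := hOk.1 l hl
    exact ⟨h0, hnd, chain'_sup_edge hch (hj l hl).1 (hj l hl).2⟩

/-- rotation 1: attach endpoint u to interior vertex w of another list, splitting it -/
lemma rot1 {lu C D : List V} {w : V} {R : List (List V)}
    (hlu : lu ≠ []) (hD : D ≠ [])
    (h : Ok G (lu :: (C ++ w :: D) :: R))
    (hadj : G.Adj (lu.getLast hlu) w) :
    Ok G ((lu ++ (C ++ [w]).reverse) :: D :: R) ∧
      cnt ((lu ++ (C ++ [w]).reverse) :: D :: R) = cnt (lu :: (C ++ w :: D) :: R) := by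
  rw [ok_cons_iff] at h
  obtain ⟨⟨hu0, hund, huch⟩, hdisju, hrest⟩ := h
  rw [ok_cons_iff] at hrest
  obtain ⟨⟨hl0, hlnd, hlch⟩, hdisjl, hRok⟩ := hrest
  have hsplit : C ++ w :: D = (C ++ [w]) ++ D := by simp
  have hlnd' : ((C ++ [w]) ++ D).Nodup := by rwa [← hsplit]
  rw [List.nodup_append] at hlnd'
  obtain ⟨hndCw, hndD, hdisjCwD⟩ := hlnd'
  have hdisju' : lu.Disjoint (C ++ w :: D) := hdisju _ (by simp)
  constructor
  · rw [ok_cons_iff]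
    refine ⟨⟨by simp [hu0], ?_, ?_⟩, ?_, ?_⟩
    · refine List.Nodup.append hund (List.nodup_reverse.2 hndCw) ?_
      intro a ha hb
      exact hdisju' ha
        (by rw [hsplit]; exact List.mem_append_left _ (List.mem_reverse.1 hb))
    · refine huch.append ?_ ?_
      · show List.IsChain _ _
        rw [List.isChain_reverse]
        exact (hlch.prefix ⟨D, hsplit.symm⟩).imp fun a b hab => hab.symm
      · intro a ha b hb
        rw [List.getLast?_eq_getLast_of_ne_nil hu0] at ha
        simp only [Option.mem_some_iff] at ha
        subst ha
        rw [List.head?_eq_head (by simp)] at hb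
        simp only [Option.mem_some_iff] at hb
        rw [List.head_reverse, List.getLast_concat] at hb
        subst hb
        exact hadj
    · intro l' hl' a ha
      rcases List.mem_append.1 ha with h1 | h1
      · rcases List.mem_cons.1 hl' with rfl | hl''
        · intro hav
          exact hdisju' h1 (by rw [hsplit]; exact List.mem_append_right _ hav)
        · exact hdisju l' (by simp [hl'']) h1
      · rw [List.mem_reverse] at h1
        rcases List.mem_cons.1 hl' with rfl | hl''
        · intro hav
          exact hdisjCwD a h1 a hav rfl
        · intro hav
          exact hdisjl l' hl'' (by rw [hsplit]; exact List.mem_append_left _ h1) hav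
    · rw [ok_cons_iff]
      refine ⟨⟨hD, hndD, hlch.suffix ⟨C ++ [w], hsplit.symm⟩⟩, ?_, hRok⟩
      intro l' hl' a ha hav
      exact hdisjl l' hl' (by rw [hsplit]; exact List.mem_append_right _ ha) hav
  · rw [cnt_cons, cnt_cons, cnt_cons, cnt_cons]
    have h1 : 0 < lu.length := List.length_pos_iff.2 hu0
    have h2 : 0 < D.length := List.length_pos_iff.2 hD
    simp only [List.length_append, List.length_reverse, List.length_cons]
    simp
    omega

/-- rotation 2: chord from the last vertex u of a list to an interior vertex w -/
lemma rot2 {C D : List V} {w : V} {R : List (List V)}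
    (hD : D ≠ [])
    (h : Ok G ((C ++ w :: D) :: R))
    (hadj : G.Adj ((C ++ w :: D).getLast (by simp)) w) :
    Ok G (((C ++ [w]) ++ D.reverse) :: R) ∧
      cnt (((C ++ [w]) ++ D.reverse) :: R) = cnt ((C ++ w :: D) :: R) := by
  rw [ok_cons_iff] at h
  obtain ⟨⟨hl0, hlnd, hlch⟩, hdisjl, hRok⟩ := h
  have hsplit : C ++ w :: D = (C ++ [w]) ++ D := by simp
  have hperm : ((C ++ [w]) ++ D.reverse).Perm (C ++ w :: D) := by
    rw [hsplit]
    exact List.Perm.append_left _ (List.reverse_perm D)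
  have hgl : (C ++ w :: D).getLast (by simp) = D.getLast hD := by
    rw [List.getLast_append_of_ne_nil _ (by simp : w :: D ≠ []), List.getLast_cons hD]
  constructor
  · rw [ok_cons_iff]
    refine ⟨⟨by simp, hperm.nodup_iff.2 hlnd, ?_⟩, ?_, hRok⟩
    · refine List.IsChain.append ?_ ?_ ?_
      · exact hlch.prefix ⟨D, hsplit.symm⟩
      · show List.IsChain _ _
        rw [List.isChain_reverse]
        exact (hlch.suffix ⟨C ++ [w], hsplit.symm⟩).imp fun a b hab => hab.symm
      · intro a ha b hb
        rw [List.getLast?_eq_getLast_of_ne_nil (by simp : C ++ [w] ≠ [])] at ha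
        simp only [Option.mem_some_iff] at ha
        rw [List.getLast_concat] at ha
        subst ha
        rw [List.head?_eq_head (by simp [hD])] at hb
        simp only [Option.mem_some_iff] at hb
        rw [List.head_reverse] at hb
        subst hb
        rw [hgl] at hadj
        exact hadj.symm
    · intro l' hl' a ha
      exact hdisjl l' hl' (hperm.subset ha)
  · rw [cnt_cons, cnt_cons]
    have := hperm.length_eq
    omega

lemma count_lemma {m : ℕ} (A B : Finset (Fin m))
    (hA : ∀ a ∈ A, (a : ℕ) + 1 < m)
    (hB : ∀ b ∈ B, 0 < (b : ℕ))
    (hAB : ∀ a ∈ A, ∀ b ∈ B, (a : ℕ) + 1 ≠ (b : ℕ)) :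
    A.card + B.card ≤ m - 1 := by
  classical
  set A' := A.image Fin.val with hA'
  set B' := B.image (fun b : Fin m => b.val - 1) with hB'
  have hcardA : A'.card = A.card :=
    Finset.card_image_of_injective _ Fin.val_injective
  have hcardB : B'.card = B.card := by
    apply Finset.card_image_of_injOn
    intro b₁ h₁ b₂ h₂ he
    have e1 := hB b₁ h₁
    have e2 := hB b₂ h₂
    simp only at he
    have : (b₁ : ℕ) = (b₂ : ℕ) := by omega
    exact Fin.val_injective this
  have hsub : A' ∪ B' ⊆ Finset.range (m - 1) := by
    intro x hx
    rw [Finset.mem_union] at hx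
    rw [Finset.mem_range]
    rcases hx with hx | hx
    · obtain ⟨a, ha, rfl⟩ := Finset.mem_image.1 hx
      have := hA a ha
      omega
    · obtain ⟨b, hb, rfl⟩ := Finset.mem_image.1 hx
      have := hB b hb
      have : (b : ℕ) < m := b.isLt
      omega
  have hdisj : Disjoint A' B' := by
    rw [Finset.disjoint_left]
    rintro x hx hx'
    obtain ⟨a, ha, rfl⟩ := Finset.mem_image.1 hx
    obtain ⟨b, hb, hbe⟩ := Finset.mem_image.1 hx'
    have := hB b hb
    exact hAB a ha b hb (by omega)
  calc A.card + B.card = A'.card + B'.card := by rw [hcardA, hcardB]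
    _ = (A' ∪ B').card := (Finset.card_union_of_disjoint hdisj).symm
    _ ≤ (Finset.range (m-1)).card := Finset.card_le_card hsub
    _ = m - 1 := Finset.card_range _

lemma card_filter_mem {l : List V} (hnd : l.Nodup) (N : Finset V) :
    ((Finset.univ : Finset (Fin l.length)).filter (fun i => l.get i ∈ N)).card
      = (l.toFinset ∩ N).card := by
  classical
  have hinj : Function.Injective l.get := List.nodup_iff_injective_get.1 hnd
  rw [← Finset.card_image_of_injective _ hinj]
  congr 1
  ext a
  simp only [Finset.mem_image, Finset.mem_filter, Finset.mem_univ, true_and,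
    Finset.mem_inter, List.mem_toFinset]
  constructor
  · rintro ⟨i, hi, rfl⟩
    exact ⟨l.get_mem i, hi⟩
  · rintro ⟨ha, hN⟩
    obtain ⟨i, hi⟩ := List.mem_iff_get.1 ha
    exact ⟨i, by rw [hi]; exact hN, hi⟩

lemma perlist_bound {l : List V} (h0 : l ≠ []) (hnd : l.Nodup) (Nu Nv : Finset V)
    (hP1 : l.getLast h0 ∉ Nu) (hP2 : l.head h0 ∉ Nv)
    (hP3 : ∀ i (h : i + 1 < l.length), l[i] ∈ Nu → l[i+1] ∉ Nv) :
    (l.toFinset ∩ Nu).card + (l.toFinset ∩ Nv).card ≤ l.length - 1 := by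
  classical
  rw [← card_filter_mem hnd Nu, ← card_filter_mem hnd Nv]
  apply count_lemma
  · intro a ha
    rw [Finset.mem_filter] at ha
    by_contra hcon
    have ham : (a : ℕ) = l.length - 1 := by have := a.isLt; omega
    apply hP1
    have : l.get a = l.getLast h0 := by
      rw [List.getLast_eq_getElem h0]
      simp only [List.get_eq_getElem]
      congr 1
    rw [← this]
    exact ha.2
  · intro b hb
    rw [Finset.mem_filter] at hb
    by_contra hcon
    have hbm : (b : ℕ) = 0 := by omega
    apply hP2
    have : l.get b = l.head h0 := by
      rw [List.head_eq_getElem_zero h0]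
      simp only [List.get_eq_getElem]
      congr 1
    rw [← this]
    exact hb.2
  · intro a ha b hb hab
    rw [Finset.mem_filter] at ha hb
    have hlt : (a : ℕ) + 1 < l.length := by have := b.isLt; omega
    apply hP3 a hlt
    · simpa using ha.2
    · have : l.get b = l[(a : ℕ)+1] := by
        simp only [List.get_eq_getElem]
        congr 1
        omega
      rw [← this]
      exact hb.2

lemma card_le_sum_inter {N : Finset V} {L : List (List V)}
    (hcov : ∀ w ∈ N, ∃ l ∈ L, w ∈ l) :
    N.card ≤ (L.map (fun l => (l.toFinset ∩ N).card)).sum := by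
  classical
  induction L generalizing N with
  | nil =>
    have : N = ∅ := by
      ext w
      simp only [Finset.notMem_empty, iff_false]
      intro hw
      obtain ⟨l, hl, _⟩ := hcov w hw
      simp at hl
    simp [this]
  | cons l R ih =>
    have hsplit : (N ∩ l.toFinset).card + (N \ l.toFinset).card = N.card :=
      Finset.card_inter_add_card_sdiff _ _
    have hrec : (N \ l.toFinset).card ≤
        (R.map (fun l' => (l'.toFinset ∩ (N \ l.toFinset)).card)).sum := by
      apply ih
      intro w hw
      rw [Finset.mem_sdiff] at hw
      obtain ⟨l', hl', hwl'⟩ := hcov w hw.1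
      rcases List.mem_cons.1 hl' with rfl | h
      · exact absurd (List.mem_toFinset.2 hwl') hw.2
      · exact ⟨l', h, hwl'⟩
    have hmono : (R.map (fun l' => (l'.toFinset ∩ (N \ l.toFinset)).card)).sum ≤
        (R.map (fun l' => (l'.toFinset ∩ N).card)).sum := by
      apply List.sum_le_sum
      intro l' _
      apply Finset.card_le_card
      intro a ha
      rw [Finset.mem_inter] at ha ⊢
      exact ⟨ha.1, (Finset.mem_sdiff.1 ha.2).1⟩
    rw [List.map_cons, List.sum_cons]
    calc N.card = (N ∩ l.toFinset).card + (N \ l.toFinset).card := hsplit.symm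
      _ ≤ (l.toFinset ∩ N).card + (R.map (fun l' => (l'.toFinset ∩ N).card)).sum := by
          rw [Finset.inter_comm]
          exact Nat.add_le_add le_rfl (le_trans hrec hmono)

lemma attach_contra {K : ℕ} (hNoK : ¬ ∃ L', Ok G L' ∧ cnt L' = K + 1)
    {lx ly : List V} {T : List (List V)} (hx0 : lx ≠ []) (hy0 : ly ≠ [])
    (hOk : Ok G (lx :: ly :: T)) (hcnt : cnt (lx :: ly :: T) = K)
    (hadj : G.Adj (lx.getLast hx0) (ly.head hy0)) : False := by
  obtain ⟨h1, h2, _⟩ := aug hx0 hy0 hOk hadj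
  exact hNoK ⟨_, h1, by rw [h2, hcnt]⟩

lemma Ok.rev2 {a l : List V} {T : List (List V)} (h : Ok G (a :: l :: T)) :
    Ok G (a :: l.reverse :: T) :=
  ((h.perm (List.Perm.swap _ _ _)).reverse_head).perm (List.Perm.swap _ _ _)

lemma cnt_rev2 (a l : List V) (T : List (List V)) :
    cnt (a :: l.reverse :: T) = cnt (a :: l :: T) := by
  simp [cnt_cons]

lemma getLast_eq_of_eq {l₁ l₂ : List V} (h : l₁ = l₂) (h₁ : l₁ ≠ []) :
    l₁.getLast h₁ = l₂.getLast (h ▸ h₁) := by subst h; rfl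

lemma head_eq_of_eq {l₁ l₂ : List V} (h : l₁ = l₂) (h₁ : l₁ ≠ []) :
    l₁.head h₁ = l₂.head (h ▸ h₁) := by subst h; rfl

lemma l_decomp {l : List V} {i : ℕ} (hi : i < l.length) :
    l = l.take i ++ l[i] :: l.drop (i+1) := by
  calc l = l.take i ++ l.drop i := (List.take_append_drop i l).symm
    _ = l.take i ++ l[i] :: l.drop (i+1) := by
        rw [List.drop_eq_getElem_cons hi]

lemma drop_ne_nil {l : List V} {i : ℕ} (hi : i + 1 < l.length) :
    l.drop (i+1) ≠ [] := by
  apply List.ne_nil_of_length_pos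
  rw [List.length_drop]
  omega

lemma drop_head {l : List V} {i : ℕ} (hi : i + 1 < l.length) (h0 : l.drop (i+1) ≠ []) :
    (l.drop (i+1)).head h0 = l[i+1] := by
  have h2 : l.drop (i+1) = l[i+1] :: l.drop (i+2) := List.drop_eq_getElem_cons hi
  rw [head_eq_of_eq h2]
  rfl

lemma attach_v_contra {K : ℕ} (hNoK : ¬ ∃ L', Ok G L' ∧ cnt L' = K + 1)
    {lv D : List V} {T : List (List V)} (hlv0 : lv ≠ []) (hD0 : D ≠ [])
    (hOk : Ok G (lv :: D :: T)) (hcnt : cnt (lv :: D :: T) = K)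
    (hadj : G.Adj (lv.head hlv0) (D.head hD0)) : False := by
  refine attach_contra hNoK (lx := lv.reverse) (ly := D)
    (by simp [hlv0]) hD0 hOk.reverse_head ?_ ?_
  · rw [cnt_reverse_head]; exact hcnt
  · rw [List.getLast_reverse]
    exact hadj

lemma swap3 (a b c : List V) (t : List (List V)) :
    (a :: b :: c :: t).Perm (c :: b :: a :: t) := by
  calc a :: b :: c :: t
      ~ a :: c :: b :: t := List.Perm.cons a (List.Perm.swap c b t)
    _ ~ c :: a :: b :: t := List.Perm.swap c a (b :: t)
    _ ~ c :: b :: a :: t := List.Perm.cons c (List.Perm.swap b a t)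

lemma perlist_facts {u v : V} {lu lv : List V} {R : List (List V)} {K : ℕ}
    (hnadj : ¬ G.Adj u v) (hOk : Ok G (lu :: lv :: R))
    (hlu0 : lu ≠ []) (hlv0 : lv ≠ [])
    (hu : u = lu.getLast hlu0) (hv : v = lv.head hlv0)
    (hcnt : cnt (lu :: lv :: R) = K)
    (hNoK : ¬ ∃ L', Ok G L' ∧ cnt L' = K + 1)
    {Nu Nv : Finset V} (hNu : ∀ w, w ∈ Nu ↔ G.Adj u w) (hNv : ∀ w, w ∈ Nv ↔ G.Adj v w)
    {l : List V} (hl : l ∈ lu :: lv :: R) (h0 : l ≠ []) :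
    (l.getLast h0 ∉ Nu) ∧ (l.head h0 ∉ Nv) ∧
      (∀ i (h : i + 1 < l.length), l[i] ∈ Nu → l[i+1] ∉ Nv) := by
  by_cases hllu : l = lu
  · subst hllu
    refine ⟨?_, ?_, ?_⟩
    · -- getLast l = u is not a neighbour of u
      intro hmem
      have he : l.getLast h0 = u := by rw [hu]
      have h2 := (hNu _).1 hmem
      rw [he] at h2
      exact G.irrefl h2
    · -- head l not adjacent to v
      intro hmem
      have hOk2 : Ok G (lv :: l :: R) := hOk.perm (List.Perm.swap lv l R)
      refine attach_v_contra hNoK hlv0 h0 hOk2 ?_ ?_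
      · rw [← cnt_perm (List.Perm.swap lv l R)]; exact hcnt
      · rw [← hv]
        exact (hNv _).1 hmem
    · -- chord rotation inside l (= lu)
      intro i hi hiu hiv
      obtain ⟨C, D, hdec, hD0, hDhead⟩ :
          ∃ C D, l = C ++ l[i] :: D ∧ D ≠ [] ∧ ∀ h0', D.head h0' = l[i+1] :=
        ⟨l.take i, l.drop (i+1), l_decomp (by omega), drop_ne_nil hi,
          fun h0' => drop_head hi h0'⟩
      have hOk1 : Ok G ((C ++ l[i] :: D) :: lv :: R) := by rw [← hdec]; exact hOk
      have hadj2 : G.Adj ((C ++ l[i] :: D).getLast (by simp)) l[i] := by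
        have he : (C ++ l[i] :: D).getLast (by simp) = l.getLast h0 :=
          (getLast_eq_of_eq hdec h0).symm
        rw [he, ← hu]
        exact (hNu _).1 hiu
      obtain ⟨hOkR, hcntR⟩ := rot2 hD0 hOk1 hadj2
      -- the new first list ends at l[i+1]; attach v's list
      have hend : ((C ++ [l[i]]) ++ D.reverse).getLast (by simp [hD0]) = l[i+1] := by
        rw [List.getLast_append_of_ne_nil _ (by simp [hD0] : D.reverse ≠ [])]
        rw [List.getLast_reverse]
        exact hDhead _
      refine attach_contra hNoK (by simp [hD0] : (C ++ [l[i]]) ++ D.reverse ≠ []) hlv0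
        hOkR ?_ ?_
      · rw [hcntR, ← hdec]; exact hcnt
      · rw [hend, ← hv]
        exact ((hNv _).1 hiv).symm
  · -- l is not lu
    have hlmem : l ∈ lv :: R := by
      rcases List.mem_cons.1 hl with h | h
      · exact absurd h hllu
      · exact h
    obtain ⟨T, hpermT⟩ : ∃ T, (lv :: R).Perm (l :: T) := ⟨_, List.perm_cons_erase hlmem⟩
    have hOk1 : Ok G (lu :: l :: T) := hOk.perm (List.Perm.cons lu hpermT)
    have hcnt1 : cnt (lu :: l :: T) = K := by
      rw [← cnt_perm (List.Perm.cons lu hpermT)]; exact hcnt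
    refine ⟨?_, ?_, ?_⟩
    · -- getLast l ∉ Nu
      intro hmem
      refine attach_contra hNoK hlu0 (by simp [h0] : l.reverse ≠ []) hOk1.rev2 ?_ ?_
      · rw [cnt_rev2]; exact hcnt1
      · rw [List.head_reverse, ← hu]
        exact (hNu _).1 hmem
    · -- head l ∉ Nv
      intro hmem
      by_cases hllv : l = lv
      · subst hllv
        have he : l.head h0 = v := by rw [hv]
        have h2 := (hNv _).1 hmem
        rw [he] at h2
        exact G.irrefl h2
      · have hlvT : lv ∈ T := by
          have := hpermT.subset (List.mem_cons_self)
          rcases List.mem_cons.1 this with h | h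
          · exact absurd h.symm hllv
          · exact h
        obtain ⟨T₂, hpermT₂⟩ : ∃ T₂, T.Perm (lv :: T₂) := ⟨_, List.perm_cons_erase hlvT⟩
        have hp : (lu :: l :: T).Perm (lv :: l :: lu :: T₂) := by
          calc lu :: l :: T ~ lu :: l :: lv :: T₂ :=
              List.Perm.cons lu (List.Perm.cons l hpermT₂)
            _ ~ lv :: l :: lu :: T₂ := swap3 lu l lv T₂
        refine attach_v_contra hNoK hlv0 h0 (hOk1.perm hp) ?_ ?_
        · rw [← cnt_perm hp]; exact hcnt1
        · rw [← hv]
          exact (hNv _).1 hmem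
    · -- crossing condition
      intro i hi hiu hiv
      obtain ⟨C, D, hdec, hD0, hDhead'⟩ :
          ∃ C D, l = C ++ l[i] :: D ∧ D ≠ [] ∧ ∀ h0', D.head h0' = l[i+1] :=
        ⟨l.take i, l.drop (i+1), l_decomp (by omega), drop_ne_nil hi,
          fun h0' => drop_head hi h0'⟩
      have hOk2 : Ok G (lu :: (C ++ l[i] :: D) :: T) := by rw [← hdec]; exact hOk1
      have hadj2 : G.Adj (lu.getLast hlu0) l[i] := by
        rw [← hu]; exact (hNu _).1 hiu
      obtain ⟨hOkR, hcntR⟩ := rot1 hlu0 hD0 hOk2 hadj2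
      have hM0 : lu ++ (C ++ [l[i]]).reverse ≠ [] := by simp [hlu0]
      have hcntM : cnt ((lu ++ (C ++ [l[i]]).reverse) :: D :: T) = K := by
        rw [hcntR, ← hdec]; exact hcnt1
      have hDhead : D.head hD0 = l[i+1] := hDhead' _
      by_cases hllv : l = lv
      · -- v is the head of l, hence the last of the merged list
        have hMlast : (lu ++ (C ++ [l[i]]).reverse).getLast hM0 = v := by
          rw [List.getLast_append_of_ne_nil _ (by simp : (C ++ [l[i]]).reverse ≠ [])]
          rw [List.getLast_reverse]
          have h1 : (C ++ [l[i]]).head (by simp) = l.head h0 := by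
            have h2 := head_eq_of_eq hdec h0
            cases C with
            | nil =>
              rw [h2]
              simp
            | cons c C' =>
              rw [h2]
              simp
          rw [h1, head_eq_of_eq hllv h0]
          exact hv.symm
        refine attach_contra hNoK hM0 hD0 hOkR hcntM ?_
        rw [hMlast, hDhead]
        exact ((hNv _).1 hiv)
      · have hlvT : lv ∈ T := by
          have := hpermT.subset (List.mem_cons_self)
          rcases List.mem_cons.1 this with h | h
          · exact absurd h.symm hllv
          · exact h
        obtain ⟨T₂, hpermT₂⟩ : ∃ T₂, T.Perm (lv :: T₂) := ⟨_, List.perm_cons_erase hlvT⟩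
        have hp : ((lu ++ (C ++ [l[i]]).reverse) :: D :: T).Perm
            (lv :: D :: (lu ++ (C ++ [l[i]]).reverse) :: T₂) := by
          calc (lu ++ (C ++ [l[i]]).reverse) :: D :: T
              ~ (lu ++ (C ++ [l[i]]).reverse) :: D :: lv :: T₂ :=
              List.Perm.cons _ (List.Perm.cons D hpermT₂)
            _ ~ lv :: D :: (lu ++ (C ++ [l[i]]).reverse) :: T₂ := swap3 _ D lv T₂
        refine attach_v_contra hNoK hlv0 hD0 (hOkR.perm hp) ?_ ?_
        · rw [← cnt_perm hp]; exact hcntM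
        · rw [hDhead, ← hv]
          exact (hNv _).1 hiv

lemma sum_map_add {L : List (List V)} (f g : List V → ℕ) :
    (L.map f).sum + (L.map g).sum = (L.map (fun x => f x + g x)).sum := by
  induction L with
  | nil => simp
  | cons l R ih => simp only [List.map_cons, List.sum_cons]; omega

lemma main_bound {u v : V} {lu lv : List V} {R : List (List V)} {K : ℕ}
    (hnadj : ¬ G.Adj u v) (hOk : Ok G (lu :: lv :: R))
    (hlu0 : lu ≠ []) (hlv0 : lv ≠ [])
    (hu : u = lu.getLast hlu0) (hv : v = lv.head hlv0)
    (hcnt : cnt (lu :: lv :: R) = K)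
    (hNoK : ¬ ∃ L', Ok G L' ∧ cnt L' = K + 1)
    {Nu Nv : Finset V} (hNu : ∀ w, w ∈ Nu ↔ G.Adj u w) (hNv : ∀ w, w ∈ Nv ↔ G.Adj v w) :
    Nu.card + Nv.card ≤ K := by
  classical
  set S := lu :: lv :: R with hS
  -- coverage of Nu
  have hcovu : ∀ w ∈ Nu, ∃ l ∈ S, w ∈ l := by
    intro w hw
    by_contra hcon
    push_neg at hcon
    have h1 : Ok G ([w] :: S) := hOk.single_fresh hcon
    have h2 : Ok G (lu :: [w] :: lv :: R) := h1.perm (List.Perm.swap lu [w] (lv :: R))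
    have e1 : cnt ([w] :: S) = K := by rw [cnt_single_cons]; exact hcnt
    refine attach_contra hNoK hlu0 (by simp : [w] ≠ []) h2 ?_ ?_
    · rw [← cnt_perm (List.Perm.swap lu [w] (lv :: R))]
      exact e1
    · show G.Adj (lu.getLast hlu0) w
      rw [← hu]
      exact (hNu _).1 hw
  -- coverage of Nv
  have hcovv : ∀ w ∈ Nv, ∃ l ∈ S, w ∈ l := by
    intro w hw
    by_contra hcon
    push_neg at hcon
    have h1 : Ok G ([w] :: S) := hOk.single_fresh hcon
    have hp : ([w] :: lu :: lv :: R).Perm (lv :: [w] :: lu :: R) := by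
      calc [w] :: lu :: lv :: R
          ~ [w] :: lv :: lu :: R := List.Perm.cons [w] (List.Perm.swap lv lu R)
        _ ~ lv :: [w] :: lu :: R := List.Perm.swap lv [w] (lu :: R)
    have h2 : Ok G (lv :: [w] :: lu :: R) := h1.perm hp
    have e1 : cnt ([w] :: S) = K := by rw [cnt_single_cons]; exact hcnt
    refine attach_v_contra hNoK hlv0 (by simp : [w] ≠ []) h2 ?_ ?_
    · rw [← cnt_perm hp]
      exact e1
    · show G.Adj (lv.head hlv0) w
      rw [← hv]
      exact (hNv _).1 hw
  have hsum1 : Nu.card ≤ (S.map (fun l => (l.toFinset ∩ Nu).card)).sum :=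
    card_le_sum_inter hcovu
  have hsum2 : Nv.card ≤ (S.map (fun l => (l.toFinset ∩ Nv).card)).sum :=
    card_le_sum_inter hcovv
  have hple : ∀ l ∈ S, (l.toFinset ∩ Nu).card + (l.toFinset ∩ Nv).card ≤ l.length - 1 := by
    intro l hlmem
    have h0 : l ≠ [] := (hOk.1 l hlmem).1
    have hnd := (hOk.1 l hlmem).2.1
    obtain ⟨f1, f2, f3⟩ :=
      perlist_facts hnadj hOk hlu0 hlv0 hu hv hcnt hNoK hNu hNv hlmem h0
    exact perlist_bound h0 hnd Nu Nv f1 f2 f3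
  calc Nu.card + Nv.card
      ≤ (S.map (fun l => (l.toFinset ∩ Nu).card)).sum
        + (S.map (fun l => (l.toFinset ∩ Nv).card)).sum := Nat.add_le_add hsum1 hsum2
    _ = (S.map (fun l => (l.toFinset ∩ Nu).card + (l.toFinset ∩ Nv).card)).sum :=
        sum_map_add _ _
    _ ≤ (S.map (fun l => l.length - 1)).sum := List.sum_le_sum hple
    _ = cnt S := rfl
    _ = K := hcnt

end LinForest

theorem stmt_6 (n k : ℕ) (G : SimpleGraph (Fin n)) (u v : Fin n)
    (hne : u ≠ v) (hadj : ¬ G.Adj u v)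
    (hdeg : k ≤ (G.neighborSet u).ncard + (G.neighborSet v).ncard) :
    (¬ ∃ F : SimpleGraph (Fin n), F ≤ G ∧ IsLinearForest F ∧ F.edgeSet.ncard = k) ↔
    (¬ ∃ F : SimpleGraph (Fin n), F ≤ G ⊔ SimpleGraph.fromEdgeSet {s(u, v)} ∧
        IsLinearForest F ∧ F.edgeSet.ncard = k) := by
  constructor
  · intro hG hEx
    rw [LinForest.hasLF_iff_hasSys] at hG
    obtain ⟨L, hOkL, hcntL⟩ := (LinForest.hasLF_iff_hasSys _ k).1 hEx
    rcases LinForest.find_junction hne hOkL with hOkG | ⟨C, D, R, hOkS, hcntS⟩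
    · exact hG ⟨L, hOkG, hcntL⟩
    · have hk1 : LinForest.cnt ((C ++ [u]) :: (v :: D) :: R) + 1 = k := by
        rw [hcntS, hcntL]
      have hfu := Set.toFinite (G.neighborSet u)
      have hfv := Set.toFinite (G.neighborSet v)
      have hNu : ∀ w, w ∈ hfu.toFinset ↔ G.Adj u w := by
        intro w
        rw [Set.Finite.mem_toFinset, SimpleGraph.mem_neighborSet]
      have hNv : ∀ w, w ∈ hfv.toFinset ↔ G.Adj v w := by
        intro w
        rw [Set.Finite.mem_toFinset, SimpleGraph.mem_neighborSet]
      have hbound := LinForest.main_bound (K := LinForest.cnt ((C ++ [u]) :: (v :: D) :: R))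
        hadj hOkS (by simp) (by simp)
        List.getLast_concat.symm rfl rfl
        (by
          intro ⟨L', hOk', hcnt'⟩
          rw [hk1] at hcnt'
          exact hG ⟨L', hOk', hcnt'⟩)
        hNu hNv
      have heq1 : (G.neighborSet u).ncard = hfu.toFinset.card :=
        Set.ncard_eq_toFinset_card _ hfu
      have heq2 : (G.neighborSet v).ncard = hfv.toFinset.card :=
        Set.ncard_eq_toFinset_card _ hfv
      omega
  · intro h ⟨F, hle, h2, h3⟩
    exact h ⟨F, le_trans hle le_sup_left, h2, h3⟩
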